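/- arXiv:1912.13008 — 8 statements merged into one kernel-verified Lean document; each statement's English description precedes it below -/
import Mathlib

section
/- Let X, Y be nonempty compact subsets of ℝ and let C be a correspondence between them with distortion D. If no two edges of C cross (i.e., there are no pairs (x1,y1),(x2,y2) ∈ C with x1 < x2 and y1 > y2, or x1 > x2 and y1 < y2), and if (min X, y1) ∈ C with min X = y1 and (max X, y2) ∈ C with y1 ≤ y2, then the Hausdorff distance d_H(X,Y) ≤ D. -/
/-- A correspondence between subsets `X` and `Y` of `ℝ`. -/
def IsCorrOn (X Y : Set ℝ) (C : Set (ℝ × ℝ)) : Prop :=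
  C ⊆ X ×ˢ Y ∧ (∀ x ∈ X, ∃ y, (x, y) ∈ C) ∧ (∀ y ∈ Y, ∃ x, (x, y) ∈ C)

theorem hausdorffDist_le_of_no_crossing (X Y : Set ℝ) (C : Set (ℝ × ℝ)) (D : ℝ)
    (hX : IsCompact X) (hXn : X.Nonempty) (hY : IsCompact Y) (hYn : Y.Nonempty)
    (hC : IsCorrOn X Y C)
    (hD : ∀ p ∈ C, ∀ q ∈ C, abs (|p.1 - q.1| - |p.2 - q.2|) ≤ D)
    (hnc : ∀ p ∈ C, ∀ q ∈ C, ¬(p.1 < q.1 ∧ p.2 > q.2) ∧ ¬(p.1 > q.1 ∧ p.2 < q.2))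
    (y1 y2 : ℝ) (h1 : (sInf X, y1) ∈ C) (h1' : sInf X = y1)
    (h2 : (sSup X, y2) ∈ C) (h12 : y1 ≤ y2) :
    Metric.hausdorffDist X Y ≤ D := by
  rw [h1'] at h1
  have key : ∀ x y : ℝ, (x, y) ∈ C → |x - y| ≤ D := by
    intro x y hxy
    have hxX : x ∈ X := (hC.1 hxy).1
    have hx1 : y1 ≤ x := h1' ▸ csInf_le hX.bddBelow hxX
    have hd := hD _ h1 _ hxy
    simp only at hd
    rcases le_or_gt y1 y with hy | hy
    · rw [abs_sub_le_iff] at hd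
      rw [abs_of_nonpos (by linarith : y1 - x ≤ 0),
        abs_of_nonpos (by linarith : y1 - y ≤ 0)] at hd
      rw [abs_le]; constructor <;> linarith [hd.1, hd.2]
    · have hnc' := (hnc _ h1 _ hxy).1
      simp only at hnc'
      have hx : x = y1 := le_antisymm (by by_contra h; exact hnc' ⟨lt_of_not_ge h, hy⟩) hx1
      rw [abs_sub_le_iff] at hd
      rw [abs_of_nonpos (by linarith : y1 - x ≤ 0),
        abs_of_nonneg (by linarith : 0 ≤ y1 - y)] at hd
      rw [abs_le]; constructor <;> linarith [hd.1, hd.2]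
  have hD0 : 0 ≤ D := by have := key _ _ h1; simpa using this
  apply Metric.hausdorffDist_le_of_mem_dist hD0
  · intro x hx
    obtain ⟨y, hy⟩ := hC.2.1 x hx
    exact ⟨y, (hC.1 hy).2, by rw [Real.dist_eq]; exact key _ _ hy⟩
  · intro y hy
    obtain ⟨x, hx⟩ := hC.2.2 y hy
    exact ⟨x, (hC.1 hx).1, by rw [Real.dist_eq, abs_sub_comm]; exact key _ _ hx⟩
end

section
/- For any two nonempty compact subsets X, Y of ℝ, d_{H,iso}(X,Y) ≤ 2·d_GH(X,Y), where d_{H,iso}(X,Y) is the infimum over all isometries T of ℝ (translations and reflections) of the Hausdorff distance d_H(X, T(Y)). -/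
open Metric Set

/-- Gromov-Hausdorff distance between nonempty compact subsets of a metric space. -/
noncomputable def ghDistSet {E : Type*} [MetricSpace E] (X Y : Set E)
    (hX : IsCompact X) (hXn : X.Nonempty) (hY : IsCompact Y) (hYn : Y.Nonempty) : ℝ :=
  haveI := hXn.to_subtype
  haveI := hYn.to_subtype
  haveI := isCompact_iff_compactSpace.mp hX
  haveI := isCompact_iff_compactSpace.mp hY
  GromovHausdorff.ghDist X Y

/-- `d_{H,iso}`: infimum over isometries `t ↦ ±t + c` of `ℝ` of the Hausdorff distance. -/
noncomputable def dHiso (X Y : Set ℝ) : ℝ :=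
  sInf {r | ∃ ε c : ℝ, (ε = 1 ∨ ε = -1) ∧
    r = Metric.hausdorffDist X ((fun t => ε * t + c) '' Y)}

/-- Main combinatorial lemma: given a correspondence of distortion `≤ r` between `X ⊆ [a,b]`
and `Y ⊆ [α,β]` with `β - α ≤ b - a`, where the partners `p, q` of `a, b` satisfy `p ≤ q`,
the translation by `c = ((a-p)+(b-q))/2` brings `Y` within Hausdorff distance `r` of `X`. -/
lemma cover_lemma (X Y : Set ℝ) (C : Set (ℝ × ℝ)) (r a b α β p q : ℝ)
    (hmemX : ∀ z ∈ C, z.1 ∈ X) (hmemY : ∀ z ∈ C, z.2 ∈ Y)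
    (hCX : ∀ x ∈ X, ∃ y ∈ Y, (x, y) ∈ C)
    (hCY : ∀ y ∈ Y, ∃ x ∈ X, (x, y) ∈ C)
    (hdis : ∀ x y x' y' : ℝ, (x, y) ∈ C → (x', y') ∈ C →
      |(|x - x'| - |y - y'|)| ≤ r)
    (hXbd : ∀ x ∈ X, a ≤ x ∧ x ≤ b)
    (hYbd : ∀ y ∈ Y, α ≤ y ∧ y ≤ β)
    (hap : (a, p) ∈ C) (hbq : (b, q) ∈ C) (hpq : p ≤ q)
    (hd : β - α ≤ b - a) :
    ∃ c : ℝ, (∀ x ∈ X, ∃ y ∈ Y, |x - (y + c)| ≤ r) ∧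
      (∀ y ∈ Y, ∃ x ∈ X, |x - (y + c)| ≤ r) := by
  have haX : a ∈ X := hmemX _ hap
  have hbX : b ∈ X := hmemX _ hbq
  have hpY : p ∈ Y := hmemY _ hap
  have hqY : q ∈ Y := hmemY _ hbq
  have hr0 : 0 ≤ r := by simpa using hdis a p a p hap hap
  have hab : a ≤ b := (hXbd b hbX).1
  have hαp : α ≤ p := (hYbd p hpY).1
  have hqβ : q ≤ β := (hYbd q hqY).2
  have hmain : |(b - a) - (q - p)| ≤ r := by
    have h := hdis b q a p hbq hap
    rwa [abs_of_nonneg (by linarith : (0:ℝ) ≤ b - a),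
      abs_of_nonneg (by linarith : (0:ℝ) ≤ q - p)] at h
  have h1 : (b - a) - (q - p) ≤ r := (abs_le.mp hmain).2
  have h2 : -r ≤ (b - a) - (q - p) := (abs_le.mp hmain).1
  have hδ0 : q - p ≤ b - a := by linarith
  have hep : p - α ≤ r := by linarith
  have heq : β - q ≤ r := by linarith
  refine ⟨((a - p) + (b - q)) / 2, ?_, ?_⟩
  · -- every x ∈ X is close to some translated point of Y
    intro x hx
    obtain ⟨y, hyY, hxy⟩ := hCX x hx
    obtain ⟨hax, hxb⟩ := hXbd x hx
    obtain ⟨hαy, hyβ⟩ := hYbd y hyY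
    have d1 := hdis x y a p hxy hap
    have d2 := hdis x y b q hxy hbq
    rw [abs_of_nonneg (by linarith : (0:ℝ) ≤ x - a)] at d1
    rw [abs_of_nonpos (by linarith : x - b ≤ 0)] at d2
    rcases le_or_gt p y with h1y | h1y
    · rcases le_or_gt y q with h2y | h2y
      · refine ⟨y, hyY, ?_⟩
        rw [abs_of_nonneg (by linarith : (0:ℝ) ≤ y - p)] at d1
        rw [abs_of_nonpos (by linarith : y - q ≤ 0)] at d2
        rw [abs_le] at d1 d2 ⊢
        constructor <;> linarith [d1.1, d1.2, d2.1, d2.2]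
      · -- y > q : use q as witness
        refine ⟨q, hqY, ?_⟩
        rw [abs_of_nonneg (by linarith : (0:ℝ) ≤ y - p)] at d1
        rw [abs_of_nonneg (by linarith : (0:ℝ) ≤ y - q)] at d2
        rw [abs_le] at d1 d2 ⊢
        rcases le_or_gt (2 * (y - q)) ((b - a) - (q - p)) with hv | hv <;>
          constructor <;> linarith [d1.1, d1.2, d2.1, d2.2]
    · -- y < p : use p as witness
      refine ⟨p, hpY, ?_⟩
      rw [abs_of_nonpos (by linarith : y - p ≤ 0)] at d1
      rw [abs_of_nonpos (by linarith : y - q ≤ 0)] at d2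
      rw [abs_le] at d1 d2 ⊢
      rcases le_or_gt (2 * (p - y)) ((b - a) - (q - p)) with hv | hv <;>
        constructor <;> linarith [d1.1, d1.2, d2.1, d2.2]
  · -- every translated point of Y is close to some point of X
    intro y hyY
    obtain ⟨hαy, hyβ⟩ := hYbd y hyY
    rcases le_or_gt p y with h1y | h1y
    · rcases le_or_gt y q with h2y | h2y
      · obtain ⟨x, hxX, hxy⟩ := hCY y hyY
        obtain ⟨hax, hxb⟩ := hXbd x hxX
        refine ⟨x, hxX, ?_⟩
        have d1 := hdis x y a p hxy hap
        have d2 := hdis x y b q hxy hbq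
        rw [abs_of_nonneg (by linarith : (0:ℝ) ≤ x - a),
          abs_of_nonneg (by linarith : (0:ℝ) ≤ y - p)] at d1
        rw [abs_of_nonpos (by linarith : x - b ≤ 0),
          abs_of_nonpos (by linarith : y - q ≤ 0)] at d2
        rw [abs_le] at d1 d2 ⊢
        constructor <;> linarith [d1.1, d1.2, d2.1, d2.2]
      · -- y > q : use b as witness
        refine ⟨b, hbX, ?_⟩
        rw [abs_le]
        constructor <;> linarith
    · -- y < p : use a as witness
      refine ⟨a, haX, ?_⟩
      rw [abs_le]
      constructor <;> linarith

/-- Choosing the orientation: if `diam Y ≤ diam X`, some isometry `t ↦ εt + c` of `ℝ`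
brings `Y` within distance `r` of `X` pointwise, both ways. -/
lemma orient_lemma (X Y : Set ℝ) (C : Set (ℝ × ℝ)) (r : ℝ)
    (hX : IsCompact X) (hXn : X.Nonempty) (hY : IsCompact Y)
    (hmemX : ∀ z ∈ C, z.1 ∈ X) (hmemY : ∀ z ∈ C, z.2 ∈ Y)
    (hCX : ∀ x ∈ X, ∃ y ∈ Y, (x, y) ∈ C)
    (hCY : ∀ y ∈ Y, ∃ x ∈ X, (x, y) ∈ C)
    (hdis : ∀ x y x' y' : ℝ, (x, y) ∈ C → (x', y') ∈ C →
      |(|x - x'| - |y - y'|)| ≤ r)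
    (hd : sSup Y - sInf Y ≤ sSup X - sInf X) :
    ∃ ε c : ℝ, (ε = 1 ∨ ε = -1) ∧ (∀ x ∈ X, ∃ y ∈ Y, |x - (ε * y + c)| ≤ r) ∧
      (∀ y ∈ Y, ∃ x ∈ X, |x - (ε * y + c)| ≤ r) := by
  have haX : sInf X ∈ X := hX.sInf_mem hXn
  have hbX : sSup X ∈ X := hX.sSup_mem hXn
  obtain ⟨p, hpY, hap⟩ := hCX _ haX
  obtain ⟨q, hqY, hbq⟩ := hCX _ hbX
  have hXbd : ∀ x ∈ X, sInf X ≤ x ∧ x ≤ sSup X :=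
    fun x hx => ⟨csInf_le hX.bddBelow hx, le_csSup hX.bddAbove hx⟩
  have hYbd : ∀ y ∈ Y, sInf Y ≤ y ∧ y ≤ sSup Y :=
    fun y hy => ⟨csInf_le hY.bddBelow hy, le_csSup hY.bddAbove hy⟩
  rcases le_total p q with hpq | hpq
  · obtain ⟨c, hc1, hc2⟩ := cover_lemma X Y C r (sInf X) (sSup X) (sInf Y) (sSup Y) p q
      hmemX hmemY hCX hCY hdis hXbd hYbd hap hbq hpq hd
    refine ⟨1, c, Or.inl rfl, ?_, ?_⟩
    · intro x hx
      obtain ⟨y, hy, h⟩ := hc1 x hx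
      exact ⟨y, hy, by rw [one_mul]; exact h⟩
    · intro y hy
      obtain ⟨x, hx, h⟩ := hc2 y hy
      exact ⟨x, hx, by rw [one_mul]; exact h⟩
  · -- reflect Y
    set Y' : Set ℝ := (fun t : ℝ => -t) '' Y with hY'def
    set C' : Set (ℝ × ℝ) := {z | (z.1, -z.2) ∈ C} with hC'def
    have hmemX' : ∀ z ∈ C', z.1 ∈ X := fun z hz => hmemX (z.1, -z.2) hz
    have hmemY' : ∀ z ∈ C', z.2 ∈ Y' := by
      rintro z hz
      exact ⟨-z.2, hmemY _ hz, by simp⟩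
    have hCX' : ∀ x ∈ X, ∃ y ∈ Y', (x, y) ∈ C' := by
      intro x hx
      obtain ⟨y, hy, hc⟩ := hCX x hx
      exact ⟨-y, ⟨y, hy, rfl⟩, by simpa [hC'def] using hc⟩
    have hCY' : ∀ y ∈ Y', ∃ x ∈ X, (x, y) ∈ C' := by
      rintro y' ⟨y, hy, rfl⟩
      obtain ⟨x, hx, hc⟩ := hCY y hy
      exact ⟨x, hx, by simpa [hC'def] using hc⟩
    have hdis' : ∀ x y x' y' : ℝ, (x, y) ∈ C' → (x', y') ∈ C' →
        |(|x - x'| - |y - y'|)| ≤ r := by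
      intro x y x' y' h h'
      have h2 := hdis x (-y) x' (-y') h h'
      rw [neg_sub_neg] at h2
      rwa [abs_sub_comm y' y] at h2
    have hYbd' : ∀ y ∈ Y', -sSup Y ≤ y ∧ y ≤ -sInf Y := by
      rintro y' ⟨y, hy, rfl⟩
      obtain ⟨h1, h2⟩ := hYbd y hy
      constructor <;> simp <;> linarith
    have hap' : (sInf X, -p) ∈ C' := by simpa [hC'def] using hap
    have hbq' : (sSup X, -q) ∈ C' := by simpa [hC'def] using hbq
    obtain ⟨c, hc1, hc2⟩ := cover_lemma X Y' C' r (sInf X) (sSup X) (-sSup Y) (-sInf Y)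
      (-p) (-q) hmemX' hmemY' hCX' hCY' hdis' hXbd hYbd' hap' hbq'
      (by linarith) (by linarith)
    refine ⟨-1, c, Or.inr rfl, ?_, ?_⟩
    · intro x hx
      obtain ⟨y', hy', h⟩ := hc1 x hx
      obtain ⟨y, hy, rfl⟩ := hy'
      exact ⟨y, hy, by rw [show (-1 : ℝ) * y + c = -y + c by ring]; exact h⟩
    · intro y hy
      obtain ⟨x, hx, h⟩ := hc2 (-y) ⟨y, hy, rfl⟩
      exact ⟨x, hx, by rw [show (-1 : ℝ) * y + c = -y + c by ring]; exact h⟩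

/-- From any correspondence of distortion `≤ r`, conclude `dHiso X Y ≤ r`. -/
lemma key_lemma (X Y : Set ℝ) (C : Set (ℝ × ℝ)) (r : ℝ) (hr0 : 0 ≤ r)
    (hX : IsCompact X) (hXn : X.Nonempty) (hY : IsCompact Y) (hYn : Y.Nonempty)
    (hmemX : ∀ z ∈ C, z.1 ∈ X) (hmemY : ∀ z ∈ C, z.2 ∈ Y)
    (hCX : ∀ x ∈ X, ∃ y ∈ Y, (x, y) ∈ C)
    (hCY : ∀ y ∈ Y, ∃ x ∈ X, (x, y) ∈ C)
    (hdis : ∀ x y x' y' : ℝ, (x, y) ∈ C → (x', y') ∈ C →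
      |(|x - x'| - |y - y'|)| ≤ r) :
    dHiso X Y ≤ r := by
  -- obtain the isometry
  have main : ∃ ε c : ℝ, (ε = 1 ∨ ε = -1) ∧ (∀ x ∈ X, ∃ y ∈ Y, |x - (ε * y + c)| ≤ r) ∧
      (∀ y ∈ Y, ∃ x ∈ X, |x - (ε * y + c)| ≤ r) := by
    rcases le_total (sSup Y - sInf Y) (sSup X - sInf X) with hdm | hdm
    · exact orient_lemma X Y C r hX hXn hY hmemX hmemY hCX hCY hdis hdm
    · -- swap the roles of X and Y
      set C' : Set (ℝ × ℝ) := {z | (z.2, z.1) ∈ C} with hC'def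
      have hdis' : ∀ x y x' y' : ℝ, (x, y) ∈ C' → (x', y') ∈ C' →
          |(|x - x'| - |y - y'|)| ≤ r := by
        intro x y x' y' h h'
        have h2 := hdis y x y' x' h h'
        rwa [abs_sub_comm (|y - y'|) (|x - x'|)] at h2
      obtain ⟨ε, c, hε, hc1, hc2⟩ := orient_lemma Y X C' r hY hYn hX
        (fun z hz => hmemY _ hz) (fun z hz => hmemX _ hz)
        (fun y hy => by obtain ⟨x, hx, hc⟩ := hCY y hy; exact ⟨x, hx, hc⟩)
        (fun x hx => by obtain ⟨y, hy, hc⟩ := hCX x hx; exact ⟨y, hy, hc⟩)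
        hdis' hdm
      rcases hε with rfl | rfl
      · refine ⟨1, -c, Or.inl rfl, ?_, ?_⟩
        · intro x hx
          obtain ⟨y, hy, h⟩ := hc2 x hx
          refine ⟨y, hy, ?_⟩
          rw [show x - (1 * y + -c) = -(y - (1 * x + c)) by ring, abs_neg]
          exact h
        · intro y hy
          obtain ⟨x, hx, h⟩ := hc1 y hy
          refine ⟨x, hx, ?_⟩
          rw [show x - (1 * y + -c) = -(y - (1 * x + c)) by ring, abs_neg]
          exact h
      · refine ⟨-1, c, Or.inr rfl, ?_, ?_⟩
        · intro x hx
          obtain ⟨y, hy, h⟩ := hc2 x hx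
          exact ⟨y, hy, by rw [show x - (-1 * y + c) = y - (-1 * x + c) by ring]; exact h⟩
        · intro y hy
          obtain ⟨x, hx, h⟩ := hc1 y hy
          exact ⟨x, hx, by rw [show x - (-1 * y + c) = y - (-1 * x + c) by ring]; exact h⟩
  obtain ⟨ε, c, hε, hc1, hc2⟩ := main
  have hH : hausdorffDist X ((fun t => ε * t + c) '' Y) ≤ r := by
    apply hausdorffDist_le_of_mem_dist hr0
    · intro x hx
      obtain ⟨y, hy, h⟩ := hc1 x hx
      exact ⟨ε * y + c, ⟨y, hy, rfl⟩, by rwa [Real.dist_eq]⟩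
    · rintro z ⟨y, hy, rfl⟩
      obtain ⟨x, hx, h⟩ := hc2 y hy
      exact ⟨x, hx, by rwa [Real.dist_eq, abs_sub_comm]⟩
  have hmem : hausdorffDist X ((fun t => ε * t + c) '' Y) ∈
      {r | ∃ ε c : ℝ, (ε = 1 ∨ ε = -1) ∧
        r = Metric.hausdorffDist X ((fun t => ε * t + c) '' Y)} := ⟨ε, c, hε, rfl⟩
  have hbdd : BddBelow {r | ∃ ε c : ℝ, (ε = 1 ∨ ε = -1) ∧
      r = Metric.hausdorffDist X ((fun t => ε * t + c) '' Y)} := by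
    refine ⟨0, ?_⟩
    rintro s ⟨ε', c', -, rfl⟩
    exact hausdorffDist_nonneg
  exact le_trans (csInf_le hbdd hmem) hH

theorem dHiso_le_two_ghDist (X Y : Set ℝ)
    (hX : IsCompact X) (hXn : X.Nonempty) (hY : IsCompact Y) (hYn : Y.Nonempty) :
    dHiso X Y ≤ 2 * ghDistSet X Y hX hXn hY hYn := by
  haveI := hXn.to_subtype
  haveI := hYn.to_subtype
  haveI := isCompact_iff_compactSpace.mp hX
  haveI := isCompact_iff_compactSpace.mp hY
  have hgh : ghDistSet X Y hX hXn hY hYn = GromovHausdorff.ghDist X Y := rfl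
  rw [hgh]
  set d := GromovHausdorff.ghDist ↥X ↥Y with hdd
  have hd0 : 0 ≤ d := dist_nonneg
  apply le_of_forall_pos_le_add
  intro ε hε
  set Φ := GromovHausdorff.optimalGHInjl ↥X ↥Y with hΦdef
  set Ψ := GromovHausdorff.optimalGHInjr ↥X ↥Y with hΨdef
  have hΦ : Isometry Φ := GromovHausdorff.isometry_optimalGHInjl ↥X ↥Y
  have hΨ : Isometry Ψ := GromovHausdorff.isometry_optimalGHInjr ↥X ↥Y
  have hopt : hausdorffDist (range Φ) (range Ψ) = d := GromovHausdorff.hausdorffDist_optimal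
  have hfin : EMetric.hausdorffEdist (range Φ) (range Ψ) ≠ ⊤ :=
    hausdorffEdist_ne_top_of_nonempty_of_bounded (range_nonempty _) (range_nonempty _)
      (isCompact_range hΦ.continuous).isBounded (isCompact_range hΨ.continuous).isBounded
  set C : Set (ℝ × ℝ) :=
    {z | ∃ hx : z.1 ∈ X, ∃ hy : z.2 ∈ Y, dist (Φ ⟨z.1, hx⟩) (Ψ ⟨z.2, hy⟩) ≤ d + ε / 4}
    with hCdef
  have hmemX : ∀ z ∈ C, z.1 ∈ X := by rintro z ⟨hx, -, -⟩; exact hx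
  have hmemY : ∀ z ∈ C, z.2 ∈ Y := by rintro z ⟨-, hy, -⟩; exact hy
  have hCX : ∀ x ∈ X, ∃ y ∈ Y, (x, y) ∈ C := by
    intro x hx
    have hlt : hausdorffDist (range Φ) (range Ψ) < d + ε / 4 := by rw [hopt]; linarith
    obtain ⟨z, hz, hdz⟩ := exists_dist_lt_of_hausdorffDist_lt
      (Set.mem_range_self (⟨x, hx⟩ : ↥X)) hlt hfin
    obtain ⟨y0, rfl⟩ := hz
    refine ⟨(y0 : ℝ), y0.2, hx, y0.2, ?_⟩
    exact hdz.le
  have hCY : ∀ y ∈ Y, ∃ x ∈ X, (x, y) ∈ C := by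
    intro y hy
    have hlt : hausdorffDist (range Φ) (range Ψ) < d + ε / 4 := by rw [hopt]; linarith
    obtain ⟨z, hz, hdz⟩ := exists_dist_lt_of_hausdorffDist_lt'
      (Set.mem_range_self (⟨y, hy⟩ : ↥Y)) hlt hfin
    obtain ⟨x0, rfl⟩ := hz
    refine ⟨(x0 : ℝ), x0.2, x0.2, hy, ?_⟩
    exact hdz.le
  have hdis : ∀ x y x' y' : ℝ, (x, y) ∈ C → (x', y') ∈ C →
      |(|x - x'| - |y - y'|)| ≤ 2 * d + ε := by
    rintro x y x' y' ⟨hx, hy, h⟩ ⟨hx', hy', h'⟩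
    have e1 : |x - x'| = dist (Φ ⟨x, hx⟩) (Φ ⟨x', hx'⟩) := by
      rw [hΦ.dist_eq, Subtype.dist_eq, Real.dist_eq]
    have e2 : |y - y'| = dist (Ψ ⟨y, hy⟩) (Ψ ⟨y', hy'⟩) := by
      rw [hΨ.dist_eq, Subtype.dist_eq, Real.dist_eq]
    rw [e1, e2, ← Real.dist_eq]
    have htri := dist_dist_dist_le (Φ ⟨x, hx⟩) (Φ ⟨x', hx'⟩) (Ψ ⟨y, hy⟩) (Ψ ⟨y', hy'⟩)
    linarith
  exact key_lemma X Y C (2 * d + ε) (by linarith) hX hXn hY hYn hmemX hmemY hCX hCY hdis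
end

section
/- Let C be a correspondence between compact X, Y ⊆ ℝ with distortion D ≥ 0, and suppose (x',y'), (x,y) ∈ C are in standard configuration: x' ≤ x, x' − y' = y − x = D/2. If (p,q) ∈ C satisfies p > x and q < y' (a double crossing), then setting h = x − x', ε1 = p − x, ε2 = y' − q, we have ε1 − ε2 ≥ h. -/
theorem double_crossing_eps_sub_ge (X Y : Set ℝ) (C : Set (ℝ × ℝ)) (D : ℝ) (hD0 : 0 ≤ D)
    (hX : IsCompact X) (hY : IsCompact Y) (hC : IsCorrOn X Y C)
    (hdist : ∀ p ∈ C, ∀ q ∈ C, abs (|p.1 - q.1| - |p.2 - q.2|) ≤ D)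
    (x' y' x y : ℝ) (hx'y' : (x', y') ∈ C) (hxy : (x, y) ∈ C)
    (hxx : x' ≤ x) (hstd1 : x' - y' = D / 2) (hstd2 : y - x = D / 2)
    (p q : ℝ) (hpq : (p, q) ∈ C) (hp : p > x) (hq : q < y') :
    (p - x) - (y' - q) ≥ x - x' := by
  have h1 := hdist (p, q) hpq (x, y) hxy
  simp only at h1
  have hqy : q < y := by linarith
  rw [abs_of_pos (by linarith : (0:ℝ) < p - x), abs_of_neg (by linarith : q - y < 0)] at h1
  have h2 := abs_le.mp h1
  linarith [h2.1, h2.2]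
end

section
/- Let C be a correspondence between compact X, Y ⊆ ℝ with distortion D ≥ 0, and suppose (x',y'), (x,y) ∈ C satisfy x' ≤ x and x' − y' = y − x = D/2. If there exists (p,q) ∈ C with p > x and q < y' (a double crossing), then h = x − x' satisfies h ≤ D/2. -/
theorem double_crossing_h_le (X Y : Set ℝ) (C : Set (ℝ × ℝ)) (D : ℝ) (hD0 : 0 ≤ D)
    (hX : IsCompact X) (hY : IsCompact Y) (hC : IsCorrOn X Y C)
    (hdist : ∀ p ∈ C, ∀ q ∈ C, abs (|p.1 - q.1| - |p.2 - q.2|) ≤ D)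
    (x' y' x y : ℝ) (hx'y' : (x', y') ∈ C) (hxy : (x, y) ∈ C)
    (hxx : x' ≤ x) (hstd1 : x' - y' = D / 2) (hstd2 : y - x = D / 2)
    (p q : ℝ) (hpq : (p, q) ∈ C) (hp : p > x) (hq : q < y') :
    x - x' ≤ D / 2 := by
  have h1 := hdist _ hpq _ hx'y'
  have h2 := hdist _ hpq _ hxy
  simp only at h1 h2
  rw [abs_of_pos (by linarith : (0:ℝ) < p - x'), abs_of_neg (by linarith : q - y' < 0)] at h1
  rw [abs_of_pos (by linarith : (0:ℝ) < p - x), abs_of_neg (by linarith : q - y < 0)] at h2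
  have h1' := abs_le.mp h1
  have h2' := abs_le.mp h2
  linarith [h1'.1, h1'.2, h2'.1, h2'.2]
end

section
/- Let C be a correspondence between compact X, Y ⊆ ℝ with distortion D ≥ 0, with (x',y'), (x,y) ∈ C satisfying x' ≤ x and x' − y' = y − x = D/2, and a double crossing (p,q) ∈ C (p > x, q < y'). Let q̃ = (x + x') − q be the reflection of q about the midpoint of x and x'. Then |p − q̃| ≤ D/2 − (x − x'). -/
theorem double_crossing_reflect_close (X Y : Set ℝ) (C : Set (ℝ × ℝ)) (D : ℝ) (hD0 : 0 ≤ D)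
    (hX : IsCompact X) (hY : IsCompact Y) (hC : IsCorrOn X Y C)
    (hdist : ∀ p ∈ C, ∀ q ∈ C, abs (|p.1 - q.1| - |p.2 - q.2|) ≤ D)
    (x' y' x y : ℝ) (hx'y' : (x', y') ∈ C) (hxy : (x, y) ∈ C)
    (hxx : x' ≤ x) (hstd1 : x' - y' = D / 2) (hstd2 : y - x = D / 2)
    (p q : ℝ) (hpq : (p, q) ∈ C) (hp : p > x) (hq : q < y') :
    |p - ((x + x') - q)| ≤ D / 2 - (x - x') := by
  have h1 := hdist _ hpq _ hxy
  have h2 := hdist _ hpq _ hx'y'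
  simp only at h1 h2
  have hqy : q < y := by linarith
  rw [abs_of_pos (by linarith : (0:ℝ) < p - x), abs_of_neg (by linarith : q - y < 0)] at h1
  rw [abs_of_pos (by linarith : (0:ℝ) < p - x'), abs_of_neg (by linarith : q - y' < 0)] at h2
  rw [abs_le] at h1 h2 ⊢
  constructor <;> [linarith [h1.1]; linarith [h2.1]]
end

section
/- Let C be a correspondence between compact X, Y ⊆ ℝ with distortion D ≥ 0, with (x',y'), (x,y) ∈ C in standard configuration (x' ≤ x, x' − y' = y − x = D/2), a wide crossing (p,q) ∈ C with p < x' − D or p > x + D and p,q crossing both designated edges, and an edge (p0,q0) ∈ C with p0 > x + D and y' < q0 < y. Then y − q0 ≥ x − x'. -/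
theorem wide_crossing_lemma (X Y : Set ℝ) (C : Set (ℝ × ℝ)) (D : ℝ) (hD0 : 0 ≤ D)
    (hX : IsCompact X) (hY : IsCompact Y) (hC : IsCorrOn X Y C)
    (hdist : ∀ p ∈ C, ∀ q ∈ C, abs (|p.1 - q.1| - |p.2 - q.2|) ≤ D)
    (x' y' x y : ℝ) (hx'y' : (x', y') ∈ C) (hxy : (x, y) ∈ C)
    (hxx : x' ≤ x) (hstd1 : x' - y' = D / 2) (hstd2 : y - x = D / 2)
    -- a wide crossing edge (p, q): crosses both designated edges, with p outside (x'-D, x+D)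
    (p q : ℝ) (hpq : (p, q) ∈ C)
    (hcross1 : (p - x') * (q - y') < 0) (hcross2 : (p - x) * (q - y) < 0)
    (hwide : p < x' - D ∨ p > x + D)
    -- an edge (p0, q0) with p0 > x + D and y' < q0 < y
    (p0 q0 : ℝ) (hp0q0 : (p0, q0) ∈ C) (hp0 : p0 > x + D) (hq0 : y' < q0 ∧ q0 < y) :
    y - q0 ≥ x - x' := by
  obtain ⟨hq0l, hq0r⟩ := hq0
  have hA := abs_le.mp (hdist (p, q) hpq (x', y') hx'y')
  have hB := abs_le.mp (hdist (p, q) hpq (x, y) hxy)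
  have hCc := abs_le.mp (hdist (p0, q0) hp0q0 (x, y) hxy)
  have hDd := abs_le.mp (hdist (p0, q0) hp0q0 (x', y') hx'y')
  have hE := abs_le.mp (hdist (p0, q0) hp0q0 (p, q) hpq)
  dsimp only at hA hB hCc hDd hE
  have e6 : |p0 - x| = p0 - x := abs_of_pos (by linarith)
  have e7 : |q0 - y| = y - q0 := by
    rw [abs_of_neg (by linarith : q0 - y < 0)]; ring
  have e8 : |p0 - x'| = p0 - x' := abs_of_pos (by linarith)
  have e9 : |q0 - y'| = q0 - y' := abs_of_pos (by linarith)
  cases hwide with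
  | inl hw =>
    have hpx' : p - x' < 0 := by linarith
    have hpx : p - x < 0 := by linarith
    have hqy' : 0 < q - y' := by
      rcases mul_neg_iff.mp hcross1 with ⟨h1, _⟩ | ⟨_, h2⟩ <;> linarith
    have hqy : 0 < q - y := by
      rcases mul_neg_iff.mp hcross2 with ⟨h1, _⟩ | ⟨_, h2⟩ <;> linarith
    have e1 : |p - x'| = x' - p := by rw [abs_of_neg hpx']; ring
    have e2 : |q - y'| = q - y' := abs_of_pos hqy'
    have e3 : |p0 - p| = p0 - p := abs_of_pos (by linarith)
    have e4 : |q0 - q| = q - q0 := by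
      rw [abs_of_neg (by linarith : q0 - q < 0)]; ring
    linarith [hA.1, hA.2, hE.1, hE.2]
  | inr hw =>
    have hpx : 0 < p - x := by linarith
    have hpx' : 0 < p - x' := by linarith
    have hqy : q - y < 0 := by
      rcases mul_neg_iff.mp hcross2 with ⟨_, h2⟩ | ⟨h1, _⟩ <;> linarith
    have hqy' : q - y' < 0 := by
      rcases mul_neg_iff.mp hcross1 with ⟨_, h2⟩ | ⟨h1, _⟩ <;> linarith
    have e1 : |p - x'| = p - x' := abs_of_pos hpx'
    have e2 : |q - y'| = y' - q := by rw [abs_of_neg hqy']; ring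
    have e4 : |q0 - q| = q0 - q := abs_of_pos (by linarith)
    rcases le_or_gt p0 p with h | h
    · have e5 : |p0 - p| = p - p0 := by
        rw [abs_of_nonpos (by linarith : p0 - p ≤ 0)]; ring
      linarith [hA.2, hDd.2, hE.1, hE.2, hCc.2]
    · have e5 : |p0 - p| = p0 - p := abs_of_pos (by linarith)
      linarith [hA.2, hDd.2, hE.1, hE.2, hCc.2]
end

section
/- Let C be a correspondence between compact X, Y ⊆ ℝ with distortion D, in standard configuration with designated edges (x',y'), (x,y) (x' ≤ x, x' − y' = y − x = D/2). Suppose p0 ∈ X with p0 > x + D, and (p0, q0) ∈ C with y' ≤ q0 ≤ y. Set ε = p0 − x − D and ε' = y − q0. Then ε ≤ ε', ε + ε' ≤ D, and hence ε ≤ D/2. -/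
theorem eps_bounds (X Y : Set ℝ) (C : Set (ℝ × ℝ)) (D : ℝ)
    (hX : IsCompact X) (hY : IsCompact Y) (hC : IsCorrOn X Y C)
    (hdist : ∀ p ∈ C, ∀ q ∈ C, abs (|p.1 - q.1| - |p.2 - q.2|) ≤ D)
    (x' y' x y : ℝ) (hx'y' : (x', y') ∈ C) (hxy : (x, y) ∈ C)
    (hxx : x' ≤ x) (hstd1 : x' - y' = D / 2) (hstd2 : y - x = D / 2)
    (p0 q0 : ℝ) (hp0X : p0 ∈ X) (hp0 : p0 > x + D)
    (hp0q0 : (p0, q0) ∈ C) (hq0 : y' ≤ q0 ∧ q0 ≤ y) :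
    p0 - x - D ≤ y - q0 ∧ (p0 - x - D) + (y - q0) ≤ D ∧ p0 - x - D ≤ D / 2 := by
  have hD : 0 ≤ D := by simpa using hdist _ hxy _ hxy
  have h1 := hdist _ hp0q0 _ hxy
  have h2 := hdist _ hp0q0 _ hx'y'
  simp only at h1 h2
  have e1 : |p0 - x| = p0 - x := abs_of_pos (by linarith)
  have e2 : |q0 - y| = y - q0 := by
    rw [abs_sub_comm]; exact abs_of_nonneg (by linarith [hq0.2])
  have e3 : |p0 - x'| = p0 - x' := abs_of_pos (by linarith)
  have e4 : |q0 - y'| = q0 - y' := abs_of_nonneg (by linarith [hq0.1])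
  rw [e1, e2] at h1
  rw [e3, e4] at h2
  rw [abs_le] at h1 h2
  refine ⟨by linarith [h1.2], by linarith [h2.2], by linarith [h1.2, h2.2]⟩
end

section
/- Let C be a correspondence between compact X, Y ⊆ ℝ with distortion D, in standard configuration with designated edges (x',y'), (x,y) (x' ≤ x, x' − y' = y − x = D/2). For every x0 ∈ X with x' ≤ x0 ≤ x and every q ∈ Y with (x0, q) ∈ C, it holds that y' ≤ q ≤ y and |x0 − q| ≤ D/2. -/
theorem middle_points_matched_close (X Y : Set ℝ) (C : Set (ℝ × ℝ)) (D : ℝ)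
    (hX : IsCompact X) (hY : IsCompact Y) (hC : IsCorrOn X Y C)
    (hdist : ∀ p ∈ C, ∀ q ∈ C, abs (|p.1 - q.1| - |p.2 - q.2|) ≤ D)
    (x' y' x y : ℝ) (hx'y' : (x', y') ∈ C) (hxy : (x, y) ∈ C)
    (hxx : x' ≤ x) (hstd1 : x' - y' = D / 2) (hstd2 : y - x = D / 2) :
    ∀ x0 ∈ X, x' ≤ x0 → x0 ≤ x → ∀ q : ℝ, (x0, q) ∈ C →
      y' ≤ q ∧ q ≤ y ∧ |x0 - q| ≤ D / 2 := by
  intro x0 hx0 hle1 hle2 q hq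
  have hd1 := hdist _ hq _ hx'y'
  have hd2 := hdist _ hxy _ hq
  simp only at hd1 hd2
  have e1 : |x0 - x'| = x0 - x' := abs_of_nonneg (by linarith)
  have e2 : |x - x0| = x - x0 := abs_of_nonneg (by linarith)
  rw [e1, abs_le] at hd1
  rw [e2, abs_le] at hd2
  have a1 := le_abs_self (q - y')
  have a2 := le_abs_self (y - q)
  refine ⟨by linarith [hd2.1], by linarith [hd1.1], ?_⟩
  rw [abs_le]
  constructor <;> linarith [hd1.1, hd2.1]
end
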